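/- If the dependency graph of a finite ground normal logic program P has no positive cycle, then P has at most one stable model. -/

import Mathlib

/-- Three truth values: false, unknown, true. -/
inductive TV3 | fls | unk | tru
  deriving DecidableEq

namespace TV3

def toFin : TV3 → Fin 3
  | fls => 0 | unk => 1 | tru => 2

/-- The truth order f < u < t. -/
instance : LinearOrder TV3 :=
  LinearOrder.lift' toFin (by intro a b h; cases a <;> cases b <;> simp_all [toFin])

instance : BoundedOrder TV3 where
  top := tru
  bot := fls
  le_top x := by cases x <;> decide
  bot_le x := by cases x <;> decide

/-- Kleene negation. -/
def neg : TV3 → TV3 | fls => tru | unk => unk | tru => fls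

end TV3

def ofBool : Bool → TV3 | true => .tru | false => .fls

/-- The subset order on truth values: f <ₛ u and t <ₛ u. -/
def leS (x y : TV3) : Prop := x = y ∨ y = TV3.unk

section LP

variable {A : Type*} [Fintype A] [DecidableEq A]

/-- Pointwise subset order on 3-valued interpretations. -/
def leSI (I₁ I₂ : A → TV3) : Prop := ∀ a, leS (I₁ a) (I₂ a)

/-- The set of 2-valued interpretations compatible with a 3-valued one. -/
def gamma (I : A → TV3) : Set (A → Bool) :=
  {J | ∀ a, I a ≠ TV3.unk → ofBool (J a) = I a}

/-- A ground normal rule: head ← pos, ∼neg. -/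
structure Rule (A : Type*) where
  head : A
  pos : Finset A
  neg : Finset A
  deriving DecidableEq

/-- A finite ground normal logic program. -/
abbrev Program (A : Type*) [DecidableEq A] := Finset (Rule A)

/-- Immediate consequence operator T_P. -/
def TP (P : Program A) (J : A → Bool) (a : A) : Bool :=
  decide (∃ r ∈ P, r.head = a ∧ (∀ p ∈ r.pos, J p = true) ∧ (∀ q ∈ r.neg, J q = false))

/-- 2-valued value of the body formula of a rule. -/
noncomputable def bodyVal2 (r : Rule A) (s : A → Bool) : Bool :=
  (r.pos.inf s) && !(r.neg.sup s)

/-- The Boolean network encoding of a program: f_v = ⋁_{head r = v} body-formula(r). -/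
noncomputable def encBN (P : Program A) : A → (A → Bool) → Bool :=
  fun v s => P.sup fun r => if r.head = v then bodyVal2 r s else false

/-- 3-valued (Kleene) value of the body formula of a rule. -/
def bodyVal3 (r : Rule A) (I : A → TV3) : TV3 :=
  (r.pos.inf I) ⊓ (r.neg.inf fun q => TV3.neg (I q))

/-- 3-valued evaluation of rhs(a), the disjunction of bodies of rules with head a. -/
def rhs3 (P : Program A) (I : A → TV3) (a : A) : TV3 :=
  P.sup fun r => if r.head = a then bodyVal3 r I else TV3.fls

/-- Signs of arcs. -/
inductive Sign | pos | neg
  deriving DecidableEq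

/-- A signed directed graph on A. -/
abbrev SGraph (A : Type*) := A → A → Sign → Prop

def posArc (P : Program A) (u v : A) : Prop := ∃ r ∈ P, r.head = v ∧ u ∈ r.pos
def negArc (P : Program A) (u v : A) : Prop := ∃ r ∈ P, r.head = v ∧ u ∈ r.neg

/-- Dependency graph of a program. -/
def dg (P : Program A) : SGraph A := fun u v s =>
  match s with
  | Sign.pos => posArc P u v
  | Sign.neg => negArc P u v

/-- Influence graph of a Boolean network. -/
def ig (f : A → (A → Bool) → Bool) : SGraph A := fun u v s =>
  match s with
  | Sign.pos => ∃ x : A → Bool, f v (Function.update x u false) < f v (Function.update x u true)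
  | Sign.neg => ∃ x : A → Bool, f v (Function.update x u true) < f v (Function.update x u false)

/-- A (closed signed) cycle in a signed graph: vertices v₀,…,vₙ with arcs
vᵢ → vᵢ₊₁ (indices mod n+1) carrying the given signs. -/
structure SCycle (G : SGraph A) where
  n : ℕ
  vtx : Fin (n + 1) → A
  sgn : Fin (n + 1) → Sign
  arc : ∀ i, G (vtx i) (vtx (i + 1)) (sgn i)

/-- A cycle is negative if it has an odd number of negative arcs. -/
def SCycle.IsNeg {G : SGraph A} (c : SCycle G) : Prop :=
  (Finset.univ.filter fun i => c.sgn i = Sign.neg).card % 2 = 1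

/-- A cycle is positive if it has an even number of negative arcs. -/
def SCycle.IsPos {G : SGraph A} (c : SCycle G) : Prop :=
  (Finset.univ.filter fun i => c.sgn i = Sign.neg).card % 2 = 0

/-- U is a positive feedback vertex set: it meets every positive cycle. -/
def IsPFVS (G : SGraph A) (U : Finset A) : Prop :=
  ∀ c : SCycle G, c.IsPos → ∃ i, c.vtx i ∈ U

/-- P is tight: its positive dependency graph is acyclic. -/
def Tight (P : Program A) : Prop :=
  IsEmpty (SCycle (fun u v s => s = Sign.pos ∧ posArc P u v))

/-- Synchronous update of a Boolean network. -/
def syncNext (f : A → (A → Bool) → Bool) (x : A → Bool) : A → Bool := fun v => f v x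

/-- Fully asynchronous transition. -/
def asyncStep (f : A → (A → Bool) → Bool) (x y : A → Bool) : Prop :=
  ∃ v, f v x ≠ x v ∧ y = Function.update x v (f v x)

/-- Nonempty trap set of the asynchronous state transition graph. -/
def IsTrapSet (f : A → (A → Bool) → Bool) (S : Set (A → Bool)) : Prop :=
  S.Nonempty ∧ ∀ x ∈ S, ∀ y, asyncStep f x y → y ∈ S

/-- Attractor: subset-minimal nonempty trap set. -/
def IsAttractor (f : A → (A → Bool) → Bool) (S : Set (A → Bool)) : Prop :=
  IsTrapSet f S ∧ ∀ T, IsTrapSet f T → T ⊆ S → T = S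

def IsFixedPoint (f : A → (A → Bool) → Bool) (x : A → Bool) : Prop :=
  syncNext f x = x

/-- Trap space of a BN under synchronous update. -/
def IsSyncTrapSpace (f : A → (A → Bool) → Bool) (m : A → TV3) : Prop :=
  ∀ s ∈ gamma m, syncNext f s ∈ gamma m

/-- Trap space of a BN under asynchronous update. -/
def IsAsyncTrapSpace (f : A → (A → Bool) → Bool) (m : A → TV3) : Prop :=
  ∀ s ∈ gamma m, ∀ y, asyncStep f s y → y ∈ gamma m

/-- Supported trap space: γ(I) is closed under T_P. -/
def IsSuppTrapSpace (P : Program A) (I : A → TV3) : Prop :=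
  ∀ J ∈ gamma I, TP P J ∈ gamma I

/-- Supported partial model: 3-valued model of Clark's completion. -/
def IsSuppPartialModel (P : Program A) (I : A → TV3) : Prop :=
  ∀ a, I a = rhs3 P I a

/-- The 3-valued one-step operator of the Przymusinski reduct P^I applied to K:
negative literals are evaluated under I (Kleene negation), positive ones under K. -/
def Phi (P : Program A) (I K : A → TV3) (a : A) : TV3 :=
  P.sup fun r =>
    if r.head = a then (r.pos.inf K) ⊓ (r.neg.inf fun q => TV3.neg (I q)) else TV3.fls

/-- Stable partial model: I is the ≤ₜ-least 3-valued model of the reduct P^I. -/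
def IsStablePartial (P : Program A) (I : A → TV3) : Prop :=
  (∀ a, Phi P I I a ≤ I a) ∧
    ∀ K : A → TV3, (∀ a, Phi P I K a ≤ K a) → ∀ a, I a ≤ K a

/-- Regular model: ≤ₛ-minimal stable partial model. -/
def IsRegularModel (P : Program A) (I : A → TV3) : Prop :=
  IsStablePartial P I ∧ ∀ I', IsStablePartial P I' → leSI I' I → I' = I

def Is2Valued (I : A → TV3) : Prop := ∀ a, I a ≠ TV3.unk

/-- The one-step operator of the Gelfond–Lifschitz reduct P^J applied to K. -/
noncomputable def PhiB (P : Program A) (J K : A → Bool) (a : A) : Bool :=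
  P.sup fun r =>
    if r.head = a then ((r.pos.inf K) && !(r.neg.sup J)) else false

/-- Stable model: J is the least model of the Gelfond–Lifschitz reduct P^J. -/
def IsStableModel (P : Program A) (J : A → Bool) : Prop :=
  (∀ a, PhiB P J J a ≤ J a) ∧
    ∀ K : A → Bool, (∀ a, PhiB P J K a ≤ K a) → ∀ a, J a ≤ K a

/-- Every cycle of dg(P) contains no negative arc. -/
def LocallyStratified (P : Program A) : Prop :=
  ∀ c : SCycle (dg P), ∀ i, c.sgn i ≠ Sign.neg

def NoNegCycle (G : SGraph A) : Prop := ∀ c : SCycle G, ¬ c.IsNeg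
def NoPosCycle (G : SGraph A) : Prop := ∀ c : SCycle G, ¬ c.IsPos

end LP

section Aux

variable {A : Type*} [Fintype A] [DecidableEq A]

lemma boolSup_true {B : Type*} (s : Finset B) (f : B → Bool) :
    s.sup f = true ↔ ∃ r ∈ s, f r = true := by
  classical
  induction s using Finset.induction_on with
  | empty => simp
  | insert _ _ _ ih => simp [Finset.sup_insert, ih]

lemma boolSup_false {B : Type*} (s : Finset B) (f : B → Bool) :
    s.sup f = false ↔ ∀ r ∈ s, f r = false := by
  classical
  induction s using Finset.induction_on with
  | empty => simp
  | insert _ _ _ ih => simp [Finset.sup_insert, ih]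

lemma boolInf_true {B : Type*} (s : Finset B) (f : B → Bool) :
    s.inf f = true ↔ ∀ r ∈ s, f r = true := by
  classical
  induction s using Finset.induction_on with
  | empty => simp
  | insert _ _ _ ih => simp [Finset.inf_insert, ih]

lemma PhiB_true (P : Program A) (J K : A → Bool) (a : A) :
    PhiB P J K a = true ↔
      ∃ r ∈ P, r.head = a ∧ (∀ p ∈ r.pos, K p = true) ∧ (∀ q ∈ r.neg, J q = false) := by
  rw [PhiB, boolSup_true]
  constructor
  · rintro ⟨r, hr, hr2⟩
    by_cases hh : r.head = a
    · rw [if_pos hh] at hr2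
      have hpos : r.pos.inf K = true := by
        cases hP : r.pos.inf K <;> simp_all
      have hneg : r.neg.sup J = false := by
        cases hN : r.neg.sup J <;> simp_all
      exact ⟨r, hr, hh, (boolInf_true _ _).mp hpos, (boolSup_false _ _).mp hneg⟩
    · rw [if_neg hh] at hr2; exact absurd hr2 (by simp)
  · rintro ⟨r, hr, hh, hp, hq⟩
    refine ⟨r, hr, ?_⟩
    rw [if_pos hh, (boolInf_true _ _).mpr hp, (boolSup_false _ _).mpr hq]
    rfl

lemma PhiB_mono (P : Program A) (J K K' : A → Bool) (hK : ∀ b, K b ≤ K' b) (a : A) :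
    PhiB P J K a ≤ PhiB P J K' a := by
  cases hv : PhiB P J K a
  · exact Bool.false_le _
  · obtain ⟨r, hr, hh, hp, hq⟩ := (PhiB_true P J K a).mp hv
    have : PhiB P J K' a = true := (PhiB_true P J K' a).mpr
      ⟨r, hr, hh, fun p hp' => by
        have := hK p; rw [hp p hp'] at this; exact le_antisymm (Bool.le_true _) this, hq⟩
    rw [this]

lemma stable_fixed (P : Program A) {J : A → Bool} (hJ : IsStableModel P J) (a : A) :
    PhiB P J J a = J a := by
  have hpre : ∀ b, PhiB P J (fun c => PhiB P J J c) b ≤ PhiB P J J b :=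
    fun b => PhiB_mono P J _ J hJ.1 b
  exact le_antisymm (hJ.1 a) (hJ.2 _ hpre a)

lemma step_lemma (P : Program A) {J₁ J₂ : A → Bool}
    (h1 : IsStableModel P J₁) (h2 : IsStableModel P J₂) (a : A) (ha : J₁ a ≠ J₂ a) :
    ∃ b, J₁ b ≠ J₂ b ∧
      ((posArc P b a ∧ J₁ b = J₁ a) ∨ (negArc P b a ∧ J₁ b = !(J₁ a))) := by
  have f1 := stable_fixed P h1
  have f2 := stable_fixed P h2
  cases hJ1 : J₁ a with
  | true =>
    have hJ2 : J₂ a = false := by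
      cases hx : J₂ a with
      | false => rfl
      | true => exact absurd (hJ1.trans hx.symm) ha
    have hP1 : PhiB P J₁ J₁ a = true := by rw [f1 a, hJ1]
    obtain ⟨r, hrP, hrh, hpos, hneg⟩ := (PhiB_true P J₁ J₁ a).mp hP1
    have hP2 : PhiB P J₂ J₂ a = false := by rw [f2 a, hJ2]
    have hnot : ¬ ((∀ p ∈ r.pos, J₂ p = true) ∧ (∀ q ∈ r.neg, J₂ q = false)) := by
      rintro ⟨hp, hq⟩
      have : PhiB P J₂ J₂ a = true := (PhiB_true P J₂ J₂ a).mpr ⟨r, hrP, hrh, hp, hq⟩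
      rw [this] at hP2; exact absurd hP2 (by simp)
    by_cases hp : ∀ p ∈ r.pos, J₂ p = true
    · have hq : ¬ ∀ q ∈ r.neg, J₂ q = false := fun hq => hnot ⟨hp, hq⟩
      push_neg at hq
      obtain ⟨q, hqm, hqv⟩ := hq
      have hq2 : J₂ q = true := by
        cases hx : J₂ q with
        | false => exact absurd hx hqv
        | true => rfl
      refine ⟨q, ?_, Or.inr ⟨⟨r, hrP, hrh, hqm⟩, by simp [hneg q hqm, hJ1]⟩⟩
      rw [hneg q hqm, hq2]
      simp
    · push_neg at hp
      obtain ⟨p, hpm, hpv⟩ := hp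
      have hp2 : J₂ p = false := by
        cases hx : J₂ p with
        | false => rfl
        | true => exact absurd hx hpv
      refine ⟨p, ?_, Or.inl ⟨⟨r, hrP, hrh, hpm⟩, by simp [hpos p hpm, hJ1]⟩⟩
      rw [hpos p hpm, hp2]
      simp
  | false =>
    have hJ2 : J₂ a = true := by
      cases hx : J₂ a with
      | false => exact absurd (hJ1.trans hx.symm) ha
      | true => rfl
    have hP2 : PhiB P J₂ J₂ a = true := by rw [f2 a, hJ2]
    obtain ⟨r, hrP, hrh, hpos, hneg⟩ := (PhiB_true P J₂ J₂ a).mp hP2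
    have hP1 : PhiB P J₁ J₁ a = false := by rw [f1 a, hJ1]
    have hnot : ¬ ((∀ p ∈ r.pos, J₁ p = true) ∧ (∀ q ∈ r.neg, J₁ q = false)) := by
      rintro ⟨hp, hq⟩
      have : PhiB P J₁ J₁ a = true := (PhiB_true P J₁ J₁ a).mpr ⟨r, hrP, hrh, hp, hq⟩
      rw [this] at hP1; exact absurd hP1 (by simp)
    by_cases hp : ∀ p ∈ r.pos, J₁ p = true
    · have hq : ¬ ∀ q ∈ r.neg, J₁ q = false := fun hq => hnot ⟨hp, hq⟩
      push_neg at hq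
      obtain ⟨q, hqm, hqv⟩ := hq
      have hq1 : J₁ q = true := by
        cases hx : J₁ q with
        | false => exact absurd hx hqv
        | true => rfl
      refine ⟨q, ?_, Or.inr ⟨⟨r, hrP, hrh, hqm⟩, by simp [hq1, hJ1]⟩⟩
      rw [hq1, hneg q hqm]
      simp
    · push_neg at hp
      obtain ⟨p, hpm, hpv⟩ := hp
      have hp1 : J₁ p = false := by
        cases hx : J₁ p with
        | false => rfl
        | true => exact absurd hx hpv
      refine ⟨p, ?_, Or.inl ⟨⟨r, hrP, hrh, hpm⟩, by simp [hp1, hJ1]⟩⟩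
      rw [hp1, hpos p hpm]
      simp

lemma tele (c : ℕ → ZMod 2) (i : ℕ) :
    ∀ m, (∑ k : Fin m, (c (i + k.val) + c (i + k.val + 1))) = c i + c (i + m) := by
  intro m
  induction m with
  | zero => simp [CharTwo.add_self_eq_zero]
  | succ m ih =>
    rw [Fin.sum_univ_castSucc]
    simp only [Fin.coe_castSucc, Fin.val_last]
    rw [ih]
    have : ∀ x y z : ZMod 2, (x + y) + (y + z) = x + z := by decide
    rw [this]
    congr 1

end Aux

/-- if the dependency graph has no positive cycle, P has at most
one stable model. -/
theorem stmt16 {A : Type*} [Fintype A] [DecidableEq A] (P : Program A)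
    (h : NoPosCycle (dg P)) :
    ∀ J₁ J₂ : A → Bool, IsStableModel P J₁ → IsStableModel P J₂ → J₁ = J₂ := by
  classical
  intro J₁ J₂ h1 h2
  by_contra hne
  have hex : ∃ a, J₁ a ≠ J₂ a := by
    by_contra h'
    push_neg at h'
    exact hne (funext h')
  obtain ⟨a0, ha0⟩ := hex
  have stepf : ∀ x : {a : A // J₁ a ≠ J₂ a}, ∃ y : {a : A // J₁ a ≠ J₂ a},
      (posArc P y.1 x.1 ∧ J₁ y.1 = J₁ x.1) ∨ (negArc P y.1 x.1 ∧ J₁ y.1 = !(J₁ x.1)) := by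
    rintro ⟨a, ha⟩
    obtain ⟨b, hb, harc⟩ := step_lemma P h1 h2 a ha
    exact ⟨⟨b, hb⟩, harc⟩
  choose f hf using stepf
  set g : ℕ → {a : A // J₁ a ≠ J₂ a} := fun n => f^[n] ⟨a0, ha0⟩ with hgdef
  have hg : ∀ t, (posArc P (g (t+1)).1 (g t).1 ∧ J₁ (g (t+1)).1 = J₁ (g t).1) ∨
      (negArc P (g (t+1)).1 (g t).1 ∧ J₁ (g (t+1)).1 = !(J₁ (g t).1)) := by
    intro t
    have hgs : g (t+1) = f (g t) := Function.iterate_succ_apply' f t _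
    rw [hgs]
    exact hf (g t)
  obtain ⟨i, j, hij, hgij⟩ : ∃ i j : ℕ, i < j ∧ g i = g j := by
    obtain ⟨x, y, hxy, hgxy⟩ := Finite.exists_ne_map_eq_of_infinite g
    rcases lt_or_gt_of_ne hxy with hlt | hgt
    · exact ⟨x, y, hlt, hgxy⟩
    · exact ⟨y, x, hgt, hgxy.symm⟩
  set n : ℕ := j - i - 1 with hn
  have hji : i + (n + 1) = j := by omega
  -- index helper
  have hidx : ∀ k : Fin (n + 1), (g (j - (k + 1 : Fin (n+1)).val)).1 = (g (j - k.val - 1)).1 := by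
    intro k
    by_cases hk : k.val < n
    · have : ((k + 1 : Fin (n+1))).val = k.val + 1 := by
        rw [Fin.val_add_one_of_lt]
        exact Fin.lt_last_iff_ne_last.mpr (by
          intro hkl
          rw [hkl] at hk
          simp at hk)
      rw [this]
      congr 2 <;> omega
    · have hk' : k.val = n := by omega
      have : ((k + 1 : Fin (n+1))).val = 0 := by
        have : k = Fin.last n := by
          apply Fin.ext; simpa [Fin.val_last] using hk'
        rw [this]
        simp
      rw [this]
      have h1' : j - 0 = j := by omega
      have h2' : j - k.val - 1 = i := by omega
      rw [h1', h2', ← hgij]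
  -- the cycle
  set c : SCycle (dg P) := {
    n := n
    vtx := fun k => (g (j - k.val)).1
    sgn := fun k => if J₁ (g (j - k.val)).1 = J₁ (g (j - k.val - 1)).1 then Sign.pos else Sign.neg
    arc := by
      intro k
      have hk1 : j - k.val - 1 + 1 = j - k.val := by
        have := k.isLt
        omega
      have harc := hg (j - k.val - 1)
      rw [hk1] at harc
      show dg P (g (j - k.val)).1 (g (j - (k+1 : Fin (n+1)).val)).1 _
      rw [hidx k]
      show dg P ((g (j - k.val)).1) ((g (j - k.val - 1)).1)
        (if J₁ (g (j - k.val)).1 = J₁ (g (j - k.val - 1)).1 then Sign.pos else Sign.neg)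
      rcases harc with ⟨hpa, heq⟩ | ⟨hna, hne'⟩
      · rw [if_pos heq]
        exact hpa
      · have hneq : J₁ (g (j - k.val)).1 ≠ J₁ (g (j - k.val - 1)).1 := by
          rw [hne']
          cases J₁ (g (j - k.val - 1)).1 <;> simp
        rw [if_neg hneq]
        exact hna
  } with hc
  apply h c
  -- parity argument
  unfold SCycle.IsPos
  set b : ℕ → Bool := fun t => J₁ (g t).1 with hb
  set c2 : ℕ → ZMod 2 := fun t => if b t then 1 else 0 with hc2
  have hcard : ((Finset.univ.filter fun k : Fin (n+1) => c.sgn k = Sign.neg).card : ZMod 2) = 0 := by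
    rw [Finset.card_filter]
    push_cast
    have hterm : ∀ k : Fin (n+1),
        ((if c.sgn k = Sign.neg then (1 : ZMod 2) else 0)) =
          c2 (j - k.val) + c2 (j - k.val - 1) := by
      intro k
      have hsgn : c.sgn k = if J₁ (g (j - k.val)).1 = J₁ (g (j - k.val - 1)).1
          then Sign.pos else Sign.neg := rfl
      rw [hsgn]
      simp only [hc2, hb]
      cases hx : J₁ (g (j - k.val)).1 <;> cases hy : J₁ (g (j - k.val - 1)).1 <;>
        decide
    calc (∑ k : Fin (n+1), if c.sgn k = Sign.neg then (1 : ZMod 2) else 0)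
        = ∑ k : Fin (n+1), (c2 (j - k.val) + c2 (j - k.val - 1)) := by
          exact Finset.sum_congr rfl fun k _ => hterm k
      _ = ∑ k : Fin (n+1), (c2 (j - (k.rev).val) + c2 (j - (k.rev).val - 1)) := by
          exact (Fintype.sum_bijective Fin.rev Fin.rev_bijective _ _ (fun k => rfl)).symm
      _ = ∑ k : Fin (n+1), (c2 (i + k.val) + c2 (i + k.val + 1)) := by
          refine Finset.sum_congr rfl fun k _ => ?_
          have hkv : k.rev.val = n - k.val := by
            simp [Fin.rev]
          have hkl := k.isLt
          have e1 : j - k.rev.val = i + k.val + 1 := by rw [hkv]; omega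
          have e2 : j - k.rev.val - 1 = i + k.val := by rw [hkv]; omega
          rw [e2, e1]
          exact add_comm _ _
      _ = c2 i + c2 (i + (n + 1)) := tele c2 i (n + 1)
      _ = 0 := by
          rw [hji]
          have : c2 i = c2 j := by simp only [hc2, hb, hgij]
          rw [this, CharTwo.add_self_eq_zero]
  have hdvd : 2 ∣ (Finset.univ.filter fun i : Fin (n+1) => c.sgn i = Sign.neg).card :=
    (ZMod.natCast_eq_zero_iff _ 2).mp hcard
  obtain ⟨t, ht⟩ := hdvd
  show (Finset.univ.filter fun i : Fin (n+1) => c.sgn i = Sign.neg).card % 2 = 0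
  omega
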